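/- Let w be a word over {a,b} and x a letter. Then H_{wx} = H_w + 1 if wx is closed, and H_{wx} = H_w if wx is open. -/

import Mathlib

/-- The two-letter alphabet {a, b}. -/
inductive AB : Type
  | a : AB
  | b : AB
deriving DecidableEq, Repr

/-- A (finite) word over {a, b}. -/
abbrev Word := List AB

open AB

/-- `u` occurs in `w` at position `i`. -/
def OccursAt (u w : Word) (i : ℕ) : Prop :=
  i + u.length ≤ w.length ∧ (w.drop i).take u.length = u

/-- `u` occurs exactly once in `w` (is unrepeated in `w`). -/
def OccursOnce (u w : Word) : Prop := ∃! i, OccursAt u w i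

/-- `u` is a right special factor of `w`: both `ua` and `ub` are factors of `w`. -/
def IsRightSpecial (u w : Word) : Prop := (u ++ [a]) <:+: w ∧ (u ++ [b]) <:+: w

/-- `u` is a left special factor of `w`: both `au` and `bu` are factors of `w`. -/
def IsLeftSpecial (u w : Word) : Prop := ([a] ++ u) <:+: w ∧ ([b] ++ u) <:+: w

/-- `K w`: the length of the shortest unrepeated suffix of `w`. -/
noncomputable def Kp (w : Word) : ℕ := sInf {n | ∃ s : Word, s <:+ w ∧ s.length = n ∧ OccursOnce s w}

/-- `H w`: the length of the shortest unrepeated prefix of `w`. -/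
noncomputable def Hp (w : Word) : ℕ := sInf {n | ∃ p : Word, p <+: w ∧ p.length = n ∧ OccursOnce p w}

/-- `R w`: the smallest `n ≥ 0` such that `w` has no right special factor of length `n`. -/
noncomputable def Rp (w : Word) : ℕ := sInf {n | ∀ u : Word, u.length = n → ¬ IsRightSpecial u w}

/-- `L w`: the smallest `n ≥ 0` such that `w` has no left special factor of length `n`. -/
noncomputable def Lp (w : Word) : ℕ := sInf {n | ∀ u : Word, u.length = n → ¬ IsLeftSpecial u w}

/-- A word `w` is trapezoidal if `|w| = K w + R w`. -/
def IsTrapezoidal (w : Word) : Prop := w.length = Kp w + Rp w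

/-- A finite word over `{a,b}` is Sturmian iff it is balanced: there is no word `u`
with both `aua` and `bub` factors of `w`. -/
def IsSturmian (w : Word) : Prop :=
  ¬ ∃ u : Word, ([a] ++ u ++ [a]) <:+: w ∧ ([b] ++ u ++ [b]) <:+: w

/-- A nonempty word is closed if it has a border (a proper prefix which is also a suffix)
whose only occurrences in `w` are as a prefix and as a suffix. -/
def IsClosedWord (w : Word) : Prop :=
  w ≠ [] ∧ ∃ v : Word, v <+: w ∧ v.length < w.length ∧ v <:+ w ∧
    ∀ i : ℕ, OccursAt v w i → i = 0 ∨ i + v.length = w.length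

/-- A nonempty word is open if it is not closed. -/
def IsOpenWord (w : Word) : Prop := w ≠ [] ∧ ¬ IsClosedWord w

/-- Central words: `a^n`, `b^n`, or `u a b v = v b a u`. -/
def IsCentral (w : Word) : Prop :=
  (∃ n : ℕ, w = List.replicate n a) ∨ (∃ n : ℕ, w = List.replicate n b) ∨
  (∃ u v : Word, w = u ++ [a, b] ++ v ∧ w = v ++ [b, a] ++ u)

/-- The minimal period of `w`: `|w|` minus the length of the longest border of `w`. -/
noncomputable def minPeriod (w : Word) : ℕ :=
  w.length - sSup {n | ∃ v : Word, v.length = n ∧ v <+: w ∧ v ≠ w ∧ v <:+ w}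

/- ### Auxiliary lemmas about occurrences -/

lemma occursAt_of_prefix {u w : Word} (h : u <+: w) : OccursAt u w 0 := by
  refine ⟨by simpa using h.length_le, ?_⟩
  simpa using (List.prefix_iff_eq_take.mp h).symm

lemma occursAt_mono {p q w : Word} {i : ℕ} (hpq : p <+: q) (h : OccursAt q w i) :
    OccursAt p w i := by
  obtain ⟨h1, h2⟩ := h
  have hlen := hpq.length_le
  refine ⟨by omega, ?_⟩
  have : (List.take q.length (w.drop i)).take p.length = p := by
    rw [h2]; exact (List.prefix_iff_eq_take.mp hpq).symm
  rwa [List.take_take, min_eq_left hlen] at this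

lemma occursAt_append {u w : Word} {x : AB} {i : ℕ} (h : OccursAt u w i) :
    OccursAt u (w ++ [x]) i := by
  obtain ⟨h1, h2⟩ := h
  refine ⟨by simp; omega, ?_⟩
  rw [List.drop_append_of_le_length (by omega),
    List.take_append_of_le_length (by simp; omega)]
  exact h2

lemma occursAt_drop {u w : Word} {x : AB} {i : ℕ} (h : OccursAt u (w ++ [x]) i)
    (hle : i + u.length ≤ w.length) : OccursAt u w i := by
  obtain ⟨_, h2⟩ := h
  refine ⟨hle, ?_⟩
  rwa [List.drop_append_of_le_length (by omega),
    List.take_append_of_le_length (by simp; omega)] at h2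

lemma occursOnce_self (w : Word) : OccursOnce w w :=
  ⟨0, occursAt_of_prefix List.prefix_rfl, fun i hi => by have := hi.1; omega⟩

lemma occursOnce_prefix_eq_zero {p w : Word} (hp : p <+: w) (ho : OccursOnce p w) {i : ℕ}
    (hi : OccursAt p w i) : i = 0 := by
  obtain ⟨i0, _, huniq⟩ := ho
  have h1 := huniq i hi
  have h2 := huniq 0 (occursAt_of_prefix hp)
  omega

lemma occursAt_of_suffix {u w : Word} (h : u <:+ w) :
    OccursAt u w (w.length - u.length) := by
  have hl := h.length_le
  refine ⟨by omega, ?_⟩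
  rw [← List.suffix_iff_eq_drop.mp h]
  simp

lemma suffix_of_occursAt_last {u w : Word} {i : ℕ} (h : OccursAt u w i)
    (he : i + u.length = w.length) : u <:+ w := by
  rw [List.suffix_iff_eq_drop]
  have hlen : (w.drop i).length = u.length := by simp; omega
  have h2 := h.2
  rw [List.take_of_length_le (le_of_eq hlen)] at h2
  rw [← h2]
  congr 1
  omega

lemma prefix_of_prefix_append {q w : Word} {x : AB} (h : q <+: w ++ [x])
    (hle : q.length ≤ w.length) : q <+: w := by
  rw [List.prefix_iff_eq_take] at h ⊢
  rwa [List.take_append_of_le_length hle] at h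

/-- If a prefix of `w` does not occur once in `w` then it has an occurrence away from `0`. -/
lemma exists_second_occurrence {q w : Word} (hq : q <+: w) (hno : ¬ OccursOnce q w) :
    ∃ j, OccursAt q w j ∧ j ≠ 0 := by
  by_contra hc
  push_neg at hc
  exact hno ⟨0, occursAt_of_prefix hq, fun j hj => hc j hj⟩

/-- behavior of `H` under right extension. -/
theorem H_extension (w : Word) (x : AB) :
    (IsClosedWord (w ++ [x]) → Hp (w ++ [x]) = Hp w + 1) ∧
    (IsOpenWord (w ++ [x]) → Hp (w ++ [x]) = Hp w) := by
  classical
  set N := w.length with hN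
  have hNx : (w ++ [x]).length = N + 1 := by simp [hN]
  -- basic facts about Hp w
  have hne : {n | ∃ p : Word, p <+: w ∧ p.length = n ∧ OccursOnce p w}.Nonempty :=
    ⟨N, w, List.prefix_rfl, rfl, occursOnce_self w⟩
  have hmem : Hp w ∈ {n | ∃ p : Word, p <+: w ∧ p.length = n ∧ OccursOnce p w} :=
    Nat.sInf_mem hne
  obtain ⟨p, hpw, hplen, hponce⟩ := hmem
  have hHle : Hp w ≤ N := Nat.sInf_le ⟨w, List.prefix_rfl, rfl, occursOnce_self w⟩
  set h := Hp w with hh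
  have hpwx : p <+: w ++ [x] := hpw.trans ⟨[x], rfl⟩
  -- (2): any prefix of w++[x] of length < h occurs at least twice in w++[x]
  have low : ∀ m, m < h → ∀ q : Word, q <+: w ++ [x] → q.length = m →
      ¬ OccursOnce q (w ++ [x]) := by
    intro m hm q hq hql honce
    have hqw : q <+: w := prefix_of_prefix_append hq (by omega)
    have hnot : ¬ OccursOnce q w := by
      intro hcon
      exact Nat.notMem_of_lt_sInf hm ⟨q, hqw, hql, hcon⟩
    obtain ⟨j, hj, hj0⟩ := exists_second_occurrence hqw hnot
    have := occursOnce_prefix_eq_zero hq honce (occursAt_append hj)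
    exact hj0 this
  -- (3): the prefix of length h+1 of w++[x] occurs exactly once in w++[x]
  have onceH1 : OccursOnce ((w ++ [x]).take (h + 1)) (w ++ [x]) := by
    set q : Word := (w ++ [x]).take (h + 1) with hqdef
    have hq : q <+: w ++ [x] := List.take_prefix _ _
    have hql : q.length = h + 1 := by simp [hqdef]; omega
    have hpq : p <+: q := List.prefix_of_prefix_length_le hpwx hq (by omega)
    refine ⟨0, occursAt_of_prefix hq, fun i hi => ?_⟩
    by_contra hi0
    have hlen := hi.1
    rw [hql] at hlen
    have hip : OccursAt p (w ++ [x]) i := occursAt_mono hpq hi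
    have hipw : OccursAt p w i := occursAt_drop hip (by omega)
    have := occursOnce_prefix_eq_zero hpw hponce hipw
    exact hi0 this
  constructor
  · -- closed case
    rintro ⟨-, v, hv1, hv2, hv3, hv4⟩
    simp at hv2
    have hvN : v.length ≤ N := by omega
    have hvw : v <+: w := prefix_of_prefix_append hv1 hvN
    -- v occurs exactly once in w
    have hvonce : OccursOnce v w := by
      refine ⟨0, occursAt_of_prefix hvw, fun i hi => ?_⟩
      have hi' := occursAt_append (x := x) hi
      rcases hv4 i hi' with h0 | hend
      · exact h0
      · have := hi.1; omega
    have hhv : h ≤ v.length := Nat.sInf_le ⟨v, hvw, rfl, hvonce⟩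
    have hpv : p <+: v := List.prefix_of_prefix_length_le hpw hvw (by omega)
    -- p occurs at the end-position of v's suffix occurrence
    have hvocc : OccursAt v (w ++ [x]) ((w ++ [x]).length - v.length) :=
      occursAt_of_suffix hv3
    have hpocc : OccursAt p (w ++ [x]) ((w ++ [x]).length - v.length) :=
      occursAt_mono hpv hvocc
    have hj0 : (w ++ [x]).length - v.length ≠ 0 := by simp; omega
    -- hence the prefix of length h occurs at least twice in w++[x]
    have notOnceH : ∀ q : Word, q <+: w ++ [x] → q.length = h →
        ¬ OccursOnce q (w ++ [x]) := by
      intro q hq hql honce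
      have : q = p := by
        have h1 := List.prefix_iff_eq_take.mp hq
        have h2 := List.prefix_iff_eq_take.mp hpwx
        rw [h1, h2, hql, hplen]
      subst this
      exact hj0 (occursOnce_prefix_eq_zero hq honce hpocc)
    -- compute the sInf
    apply le_antisymm
    · exact Nat.sInf_le ⟨(w ++ [x]).take (h + 1), List.take_prefix _ _,
        by simp; omega, onceH1⟩
    · refine le_csInf ⟨h + 1, (w ++ [x]).take (h + 1), List.take_prefix _ _,
        by simp; omega, onceH1⟩ ?_
      rintro m ⟨q, hq, hql, honce⟩
      by_contra hc
      push_neg at hc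
      rcases Nat.lt_succ_iff_lt_or_eq.mp hc with hlt | heq
      · exact low m hlt q hq hql honce
      · exact notOnceH q hq (by omega) honce
  · -- open case
    rintro ⟨hne', hnotcl⟩
    -- p occurs exactly once in w++[x]
    have ponce' : OccursOnce p (w ++ [x]) := by
      refine ⟨0, occursAt_of_prefix hpwx, fun i hi => ?_⟩
      have hil := hi.1
      simp at hil
      by_cases hcase : i + p.length ≤ N
      · exact occursOnce_prefix_eq_zero hpw hponce (occursAt_drop hi hcase)
      · -- p is then a border occurring only at the ends: w++[x] would be closed
        exfalso
        apply hnotcl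
        have hiend : i + p.length = N + 1 := by omega
        refine ⟨hne', p, hpwx, by simp; omega, ?_, ?_⟩
        · exact suffix_of_occursAt_last hi (by simp; omega)
        · intro i' hi'
          have hil' := hi'.1
          simp at hil'
          by_cases hc' : i' + p.length ≤ N
          · exact Or.inl (occursOnce_prefix_eq_zero hpw hponce (occursAt_drop hi' hc'))
          · right; simp; omega
    apply le_antisymm
    · exact Nat.sInf_le ⟨p, hpwx, hplen, ponce'⟩
    · refine le_csInf ⟨h, p, hpwx, hplen, ponce'⟩ ?_
      rintro m ⟨q, hq, hql, honce⟩
      by_contra hc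
      push_neg at hc
      exact low m hc q hq hql honce
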